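/- Fix real parameters k > 0, σ1 > 0, σ2 > 0, μ1 > 0, ρ ∈ [−1, 1], φ2 ≥ 0, φ3 ≥ 0 satisfying φ3·e^{1 + φ2/k} ≥ k·e^{σ2²/(2k) + μ1/k + (ρ/k)·σ1·σ2}. Define μ̄(s) = e^{−k s}, σ̄(s)² = (σ2²/(2k))(1 − e^{−2 k s}), and f(r, ε; t) = exp(μ̄(r−t)·ε + σ̄(r−t)²/2 + (ρ/k)·σ1·σ2·(1 − μ̄(r−t))) · (k·μ̄(r−t)·ε + k·σ̄(r−t)² − σ2²/2 − ρ·σ1·σ2·μ̄(r−t) − μ1 + φ2) + φ3. Then f(r, ε; t) ≥ 0 for all 0 ≤ t ≤ r and all ε ∈ ℝ. -/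
import Mathlib


open Real

lemma key_mul_exp_lb (y : ℝ) : -Real.exp (-1) ≤ y * Real.exp y := by
  rcases le_or_gt 0 y with h | h
  · have := mul_nonneg h (Real.exp_pos y).le
    have := Real.exp_pos (-1 : ℝ)
    linarith
  · have hpos : (0 : ℝ) < -y := by linarith
    have h1 : Real.log (-y) ≤ -y - 1 := by
      have := Real.log_le_sub_one_of_pos hpos
      linarith
    have h2 : (-y) * Real.exp y = Real.exp (Real.log (-y) + y) := by
      rw [Real.exp_add, Real.exp_log hpos]
    have h3 : Real.exp (Real.log (-y) + y) ≤ Real.exp (-1) :=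
      Real.exp_le_exp.mpr (by linarith)
    nlinarith

/-- Under condition (51) on the model parameters, the integrand `f(r, ε; t)` in the
representation of `e^ε(1 − g2(t,ε))` is nonnegative. -/
theorem f_nonneg_under_condition (k σ1 σ2 μ1 ρ φ2 φ3 : ℝ)
    (hk : 0 < k) (hσ1 : 0 < σ1) (hσ2 : 0 < σ2) (hμ1 : 0 < μ1)
    (hρ : ρ ∈ Set.Icc (-1 : ℝ) 1) (hφ2 : 0 ≤ φ2) (hφ3 : 0 ≤ φ3)
    (hcond : φ3 * Real.exp (1 + φ2 / k) ≥
      k * Real.exp (σ2 ^ 2 / (2 * k) + μ1 / k + (ρ / k) * σ1 * σ2))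
    (mubar sigbarSq : ℝ → ℝ) (f : ℝ → ℝ → ℝ → ℝ)
    (hmubar : ∀ s, mubar s = Real.exp (-k * s))
    (hsigbarSq : ∀ s, sigbarSq s = σ2 ^ 2 / (2 * k) * (1 - Real.exp (-2 * k * s)))
    (hf : ∀ r ε t, f r ε t =
      Real.exp (mubar (r - t) * ε + sigbarSq (r - t) / 2
          + (ρ / k) * σ1 * σ2 * (1 - mubar (r - t))) *
        (k * mubar (r - t) * ε + k * sigbarSq (r - t) - σ2 ^ 2 / 2
          - ρ * σ1 * σ2 * mubar (r - t) - μ1 + φ2) + φ3) :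
    ∀ t r : ℝ, 0 ≤ t → t ≤ r → ∀ ε : ℝ, 0 ≤ f r ε t := by
  intro t r ht htr ε
  rw [hf, hmubar, hsigbarSq]
  set s := r - t with hs
  have hs0 : 0 ≤ s := by simp [hs]; linarith
  set m := Real.exp (-k * s) with hm
  have hm0 : (0 : ℝ) < m := Real.exp_pos _
  set v := σ2 ^ 2 / (2 * k) * (1 - Real.exp (-2 * k * s)) with hv
  have hv0 : (0 : ℝ) ≤ v := by
    have h1 : Real.exp (-2 * k * s) ≤ 1 := by
      rw [Real.exp_le_one_iff]; nlinarith
    have h2 : (0 : ℝ) ≤ σ2 ^ 2 / (2 * k) := by positivity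
    rw [hv]; nlinarith
  set c := (ρ / k) * σ1 * σ2 with hc
  set C := k * v - σ2 ^ 2 / 2 - ρ * σ1 * σ2 * m - μ1 + φ2 with hC
  set y := m * ε + C / k with hy
  set D := v / 2 + c * (1 - m) with hD
  have hk' : k ≠ 0 := ne_of_gt hk
  -- rewrite the main term
  have hmain : Real.exp (m * ε + v / 2 + c * (1 - m)) *
      (k * m * ε + k * v - σ2 ^ 2 / 2 - ρ * σ1 * σ2 * m - μ1 + φ2)
      = k * Real.exp (D - C / k) * (y * Real.exp y) := by
    have hB : k * m * ε + k * v - σ2 ^ 2 / 2 - ρ * σ1 * σ2 * m - μ1 + φ2 = k * y := by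
      rw [hy]; field_simp; ring
    have hA : m * ε + v / 2 + c * (1 - m) = y + (D - C / k) := by
      rw [hy, hD]; ring
    rw [hB, hA, Real.exp_add]; ring
  rw [hmain]
  -- bound: k * exp (D - C/k - 1) ≤ φ3
  have hbound : k * Real.exp (D - C / k - 1) ≤ φ3 := by
    set E := σ2 ^ 2 / (2 * k) + μ1 / k + c with hE
    have hsplit : Real.exp (D - C / k - 1)
        = Real.exp E * (Real.exp (-(1 + φ2 / k)) * Real.exp (-v / 2)) := by
      rw [← Real.exp_add, ← Real.exp_add]
      congr 1
      rw [hD, hC, hE, hc]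
      field_simp
      ring
    have h1 : Real.exp (-v / 2) ≤ 1 := by
      rw [Real.exp_le_one_iff]; linarith
    have h2 : k * Real.exp E ≤ φ3 * Real.exp (1 + φ2 / k) := hcond
    have hposE : (0 : ℝ) < Real.exp (-(1 + φ2 / k)) := Real.exp_pos _
    calc k * Real.exp (D - C / k - 1)
        = (k * Real.exp E) * (Real.exp (-(1 + φ2 / k)) * Real.exp (-v / 2)) := by
          rw [hsplit]; ring
      _ ≤ (φ3 * Real.exp (1 + φ2 / k)) * (Real.exp (-(1 + φ2 / k)) * Real.exp (-v / 2)) := by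
          apply mul_le_mul_of_nonneg_right h2
          positivity
      _ = φ3 * (Real.exp (1 + φ2 / k) * Real.exp (-(1 + φ2 / k))) * Real.exp (-v / 2) := by
          ring
      _ = φ3 * Real.exp (-v / 2) := by
          rw [← Real.exp_add, show 1 + φ2 / k + -(1 + φ2 / k) = 0 by ring, Real.exp_zero, mul_one]
      _ ≤ φ3 := by nlinarith
  -- combine with key lemma
  have hkey := key_mul_exp_lb y
  have hpos : (0 : ℝ) < k * Real.exp (D - C / k) := by positivity
  have h3 : k * Real.exp (D - C / k) * (y * Real.exp y)
      ≥ k * Real.exp (D - C / k) * (-Real.exp (-1)) :=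
    mul_le_mul_of_nonneg_left hkey hpos.le
  have h4 : k * Real.exp (D - C / k) * (-Real.exp (-1)) = -(k * Real.exp (D - C / k - 1)) := by
    rw [show D - C / k - 1 = (D - C / k) + (-1) by ring, Real.exp_add]; ring
  linarith [h3, h4 ▸ h3]
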